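/- Fix a real ρ ∈ (0,1) and define φ(ρ) = H(ρ) if ρ ≤ 1/2 and φ(ρ) = 1 if ρ > 1/2. Let s ≥ 0 be a real number with s < φ(ρ), and set k_n = ⌊ρ·n⌋. Then the probability that the random 1-CARD-XOR formula ψ(n, k_n, ⌈s·n⌉) is satisfiable tends to 1 as n → ∞. -/

import Mathlib

open Finset Filter
open scoped Classical

/-- Probability of event `P` over a uniformly random pair `(A, b)` with `A` an
`m × n` matrix over `ZMod 2` and `b : Fin m → ZMod 2`. -/
noncomputable def xorProb (n m : ℕ)
    (P : Matrix (Fin m) (Fin n) (ZMod 2) × (Fin m → ZMod 2) → Prop) : ℝ :=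
  (Finset.univ.filter P).card /
    Fintype.card (Matrix (Fin m) (Fin n) (ZMod 2) × (Fin m → ZMod 2))

/-- The random 1-CARD-XOR formula `ψ(n,k,m)` is satisfied by the pair `(A, b)`:
there is an assignment of Hamming weight at most `k` solving `A ⬝ x = b`. -/
def cardXorSat (n k m : ℕ)
    (ab : Matrix (Fin m) (Fin n) (ZMod 2) × (Fin m → ZMod 2)) : Prop :=
  ∃ x : Fin n → ZMod 2, hammingNorm x ≤ k ∧ ab.1.mulVec x = ab.2

/-- Probability that `ψ(n,k,m)` is satisfiable. -/
noncomputable def satProb (n k m : ℕ) : ℝ := xorProb n m (cardXorSat n k m)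

/-- Probability that `ψ(n,k,m)` is unsatisfiable. -/
noncomputable def unsatProb (n k m : ℕ) : ℝ := xorProb n m fun ab => ¬ cardXorSat n k m ab

/-- `#F(n,k) = ∑_{w=0}^{k} C(n,w)`, the number of solutions of the at-most-`k`
cardinality constraint on `n` variables. -/
def cardSum (n k : ℕ) : ℕ := ∑ w ∈ Finset.range (k + 1), n.choose w

/-- The binary entropy function (with `H 0 = H 1 = 0` by `logb` junk values). -/
noncomputable def binEnt (μ : ℝ) : ℝ :=
  -μ * Real.logb 2 μ - (1 - μ) * Real.logb 2 (1 - μ)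

section Aux

abbrev Mat (n m : ℕ) := Matrix (Fin m) (Fin n) (ZMod 2)
abbrev Vec (m : ℕ) := Fin m → ZMod 2

lemma card_mat (n m : ℕ) : Fintype.card (Mat n m) = 2^(m*n) := by
  have : Fintype.card (Fin m → Fin n → ZMod 2) = 2^(m*n) := by
    simp [← pow_mul, Nat.mul_comm m n]
  exact this

lemma card_pairs (n m : ℕ) (x : Fin n → ZMod 2) :
    (univ.filter fun ab : Mat n m × Vec m => ab.1.mulVec x = ab.2).card = 2^(m*n) := by
  rw [← Fintype.card_subtype, ← card_mat n m]
  exact Fintype.card_congr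
    { toFun := fun ab => ab.1.1
      invFun := fun A => ⟨(A, A.mulVec x), rfl⟩
      left_inv := by rintro ⟨⟨A, b⟩, h⟩; simp only at h; subst h; rfl
      right_inv := fun A => rfl }

lemma card_hyperplane {n : ℕ} (v : Fin n → ZMod 2) (hv : v ≠ 0) :
    Fintype.card {r : Fin n → ZMod 2 // dotProduct r v = 0} = 2^(n-1) := by
  obtain ⟨j, hj⟩ : ∃ j, v j ≠ 0 := by
    by_contra h; push_neg at h; exact hv (funext h)
  have hv1 : v j = 1 := by revert hj; generalize v j = a; revert a; decide
  have key : (univ.filter fun r : Fin n → ZMod 2 => dotProduct r v = 0).card =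
      (univ.filter fun r : Fin n → ZMod 2 => ¬ dotProduct r v = 0).card := by
    apply Finset.card_bij (fun r _ => r + Pi.single j 1)
    · intro r hr
      simp only [mem_filter, mem_univ, true_and] at hr ⊢
      rw [add_dotProduct, hr, single_dotProduct, hv1, mul_one, zero_add]
      decide
    · intro a ha b hb hab
      exact add_right_cancel hab
    · intro r hr
      simp only [mem_filter, mem_univ, true_and] at hr ⊢
      refine ⟨r + Pi.single j 1, ?_, by
        rw [add_assoc]
        have : Pi.single j 1 + Pi.single j 1 = (0 : Fin n → ZMod 2) := by
          rw [← Pi.single_add]; norm_num; decide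
        rw [this, add_zero]⟩
      rw [add_dotProduct, single_dotProduct, hv1, mul_one]
      revert hr; generalize dotProduct r v = a; revert a; decide
  have hsplit := Finset.card_filter_add_card_filter_not (s := (univ : Finset (Fin n → ZMod 2)))
      (p := fun r => dotProduct r v = 0)
  rw [Fintype.card_subtype]
  have hcard : Fintype.card (Fin n → ZMod 2) = 2^n := by simp
  rw [card_univ, hcard] at hsplit
  have hn : 1 ≤ n := by
    rcases Nat.eq_zero_or_pos n with h | h
    · subst h; exact absurd (Subsingleton.elim v 0) hv
    · exact h
  have h2 : 2^n = 2 * 2^(n-1) := by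
    rw [← pow_succ']
    congr 1; omega
  omega

lemma card_mat_kernel (n m : ℕ) (v : Fin n → ZMod 2) (hv : v ≠ 0) :
    Fintype.card {A : Mat n m // A.mulVec v = 0} = 2^(m*(n-1)) := by
  have e : {A : Mat n m // A.mulVec v = 0} ≃ (Fin m → {r : Fin n → ZMod 2 // dotProduct r v = 0}) :=
    { toFun := fun A i => ⟨A.1 i, congrFun A.2 i⟩
      invFun := fun f => ⟨Matrix.of (fun i => (f i).1), funext fun i => (f i).2⟩
      left_inv := fun A => rfl
      right_inv := fun f => rfl }
  rw [Fintype.card_congr e, Fintype.card_fun, card_hyperplane v hv]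
  simp [← pow_mul, Nat.mul_comm]



lemma card_pairs2 (n m : ℕ) (x y : Fin n → ZMod 2) (hxy : x ≠ y) :
    (univ.filter fun ab : Mat n m × Vec m =>
      ab.1.mulVec x = ab.2 ∧ ab.1.mulVec y = ab.2).card = 2^(m*(n-1)) := by
  rw [← Fintype.card_subtype, ← card_mat_kernel n m (x - y) (sub_ne_zero_of_ne hxy)]
  exact Fintype.card_congr
    { toFun := fun ab => ⟨ab.1.1, by
        rw [Matrix.mulVec_sub, ab.2.1, ab.2.2, sub_self]⟩
      invFun := fun A => ⟨(A.1, A.1.mulVec x), rfl, by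
        have := A.2
        rw [Matrix.mulVec_sub, sub_eq_zero] at this
        exact this.symm⟩
      left_inv := by rintro ⟨⟨A, b⟩, h1, h2⟩; simp only at h1; subst h1; rfl
      right_inv := fun A => rfl }

noncomputable def Sset (n k : ℕ) : Finset (Fin n → ZMod 2) :=
  univ.filter fun x => hammingNorm x ≤ k

noncomputable def Zc (n k m : ℕ) (ab : Mat n m × Vec m) : ℕ :=
  ((Sset n k).filter fun x => ab.1.mulVec x = ab.2).card

lemma sum_Z (n k m : ℕ) :
    ∑ ab : Mat n m × Vec m, Zc n k m ab = (Sset n k).card * 2^(m*n) := by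
  unfold Zc
  simp_rw [Finset.card_filter]
  rw [Finset.sum_comm]
  rw [Finset.sum_congr rfl (fun x _ => (Finset.card_filter _ _).symm)]
  rw [Finset.sum_congr rfl (fun x _ => card_pairs n m x)]
  rw [Finset.sum_const, smul_eq_mul]

lemma sum_Zsq (n k m : ℕ) :
    ∑ ab : Mat n m × Vec m, Zc n k m ab * Zc n k m ab =
      (Sset n k).card * (2^(m*n) + ((Sset n k).card - 1) * 2^(m*(n-1))) := by
  unfold Zc
  have step : ∀ ab : Mat n m × Vec m, Zc n k m ab * Zc n k m ab =
      ∑ x ∈ Sset n k, ∑ y ∈ Sset n k,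
        if ab.1.mulVec x = ab.2 ∧ ab.1.mulVec y = ab.2 then 1 else 0 := by
    intro ab
    rw [Zc, Finset.card_filter, Finset.sum_mul_sum]
    refine Finset.sum_congr rfl fun x _ => Finset.sum_congr rfl fun y _ => ?_
    by_cases h1 : ab.1.mulVec x = ab.2 <;> by_cases h2 : ab.1.mulVec y = ab.2 <;>
      simp [h1, h2]
  calc ∑ ab : Mat n m × Vec m,
        ((Sset n k).filter fun x => ab.1.mulVec x = ab.2).card *
        ((Sset n k).filter fun x => ab.1.mulVec x = ab.2).card
      = ∑ ab : Mat n m × Vec m, ∑ x ∈ Sset n k, ∑ y ∈ Sset n k,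
          if ab.1.mulVec x = ab.2 ∧ ab.1.mulVec y = ab.2 then 1 else 0 :=
        Finset.sum_congr rfl fun ab _ => step ab
    _ = ∑ x ∈ Sset n k, ∑ y ∈ Sset n k, ∑ ab : Mat n m × Vec m,
          (if ab.1.mulVec x = ab.2 ∧ ab.1.mulVec y = ab.2 then 1 else 0) := by
        rw [Finset.sum_comm]
        exact Finset.sum_congr rfl fun x _ => Finset.sum_comm
    _ = ∑ x ∈ Sset n k, ∑ y ∈ Sset n k,
          (if y = x then 2^(m*n) else 2^(m*(n-1))) := by
        refine Finset.sum_congr rfl fun x _ => Finset.sum_congr rfl fun y _ => ?_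
        rw [← Finset.card_filter]
        by_cases hxy : y = x
        · subst hxy
          rw [if_pos rfl, ← card_pairs n m y]
          congr 1
          exact Finset.filter_congr fun ab _ => by simp
        · rw [if_neg hxy]
          exact card_pairs2 n m x y (fun h => hxy h.symm)
    _ = (Sset n k).card * (2^(m*n) + ((Sset n k).card - 1) * 2^(m*(n-1))) := by
        rw [Finset.sum_congr rfl (fun x hx => ?_), Finset.sum_const, smul_eq_mul]
        rw [Finset.sum_ite, Finset.sum_const, Finset.sum_const, smul_eq_mul, smul_eq_mul]
        rw [Finset.filter_eq' (Sset n k) x, if_pos hx, Finset.card_singleton, one_mul]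
        rw [Finset.filter_ne' (Sset n k) x, Finset.card_erase_of_mem hx]
lemma S_card_pos (n k : ℕ) : 0 < (Sset n k).card := by
  refine Finset.card_pos.2 ⟨0, ?_⟩
  simp [Sset, hammingNorm_zero]

lemma satProb_le_one (n k m : ℕ) : satProb n k m ≤ 1 := by
  unfold satProb xorProb
  rw [div_le_one (by positivity)]
  exact_mod_cast Finset.card_le_card (Finset.filter_subset _ _)

lemma satProb_ge (n k m : ℕ) (hn : 1 ≤ n) :
    1 - 2^m / (Sset n k).card ≤ satProb n k m := by
  classical
  set N := (Sset n k).card with hN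
  set F := (univ.filter (cardXorSat n k m)) with hFdef
  have hF : F = univ.filter (fun ab : Mat n m × Vec m => Zc n k m ab ≠ 0) := by
    refine Finset.filter_congr fun ab _ => ?_
    unfold cardXorSat Zc
    constructor
    · rintro ⟨x, hx1, hx2⟩
      exact Finset.card_ne_zero_of_mem (Finset.mem_filter.2 ⟨by simp [Sset, hx1], hx2⟩)
    · intro h
      obtain ⟨x, hx⟩ := Finset.card_pos.1 (Nat.pos_of_ne_zero h)
      rw [Finset.mem_filter] at hx
      exact ⟨x, by simpa [Sset] using hx.1, hx.2⟩
  -- Cauchy-Schwarz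
  have hCS := Finset.sum_mul_sq_le_sq_mul_sq F (fun _ => (1:ℝ))
      (fun ab => (Zc n k m ab : ℝ))
  simp only [one_mul, one_pow, Finset.sum_const, nsmul_eq_mul, mul_one] at hCS
  have hsum1 : ∑ ab ∈ F, (Zc n k m ab : ℝ) = N * 2^(m*n) := by
    rw [hF]
    have : (univ.filter (fun ab : Mat n m × Vec m => Zc n k m ab ≠ 0)) =
        (univ.filter (fun ab : Mat n m × Vec m => (Zc n k m ab : ℝ) ≠ 0)) := by
      refine Finset.filter_congr fun ab _ => by simp
    rw [this, Finset.sum_filter_ne_zero]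
    rw [← Nat.cast_sum]
    rw [sum_Z n k m]
    push_cast; ring
  have hsum2 : ∑ ab ∈ F, ((Zc n k m ab : ℝ))^2 ≤
      N * (2^(m*n) + ((N:ℝ) - 1) * 2^(m*(n-1))) := by
    have h1 : ∑ ab ∈ F, ((Zc n k m ab : ℝ))^2 ≤
        ∑ ab : Mat n m × Vec m, ((Zc n k m ab : ℝ))^2 :=
      Finset.sum_le_sum_of_subset_of_nonneg (Finset.subset_univ F)
        (fun _ _ _ => by positivity)
    refine h1.trans_eq ?_
    simp_rw [sq, ← Nat.cast_mul]
    rw [← Nat.cast_sum, sum_Zsq n k m]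
    have hN1 : 1 ≤ N := S_card_pos n k
    push_cast [Nat.cast_sub (show 1 ≤ (Sset n k).card from hN1)]
    ring
  set P : ℝ := 2^(m*(n-1)) with hP
  set Q : ℝ := 2^m with hQ
  have hPQ : (2:ℝ)^(m*n) = P * Q := by
    rw [hP, hQ, ← pow_add]
    congr 1
    obtain ⟨n', rfl⟩ : ∃ n', n = n' + 1 := ⟨n - 1, by omega⟩
    simp [Nat.mul_succ]
  have hP0 : 0 < P := by positivity
  have hQ1 : 1 ≤ Q := by rw [hQ]; exact one_le_pow₀ (by norm_num)
  have hQ0 : 0 < Q := lt_of_lt_of_le one_pos hQ1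
  have hN1 : (1:ℝ) ≤ N := by exact_mod_cast S_card_pos n k
  have hN0 : (0:ℝ) < N := lt_of_lt_of_le one_pos hN1
  rw [hsum1, hPQ] at hCS
  have hCS2 : ((N:ℝ) * (P * Q))^2 ≤ (F.card : ℝ) * (N * (P * Q + ((N:ℝ) - 1) * P)) := by
    calc ((N:ℝ) * (P * Q))^2 ≤ (F.card : ℝ) * ∑ ab ∈ F, ((Zc n k m ab : ℝ))^2 := hCS
    _ ≤ (F.card : ℝ) * (N * (P * Q + ((N:ℝ) - 1) * P)) := by
        gcongr
        rw [← hPQ]; exact hsum2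
  have hsp : satProb n k m = (F.card : ℝ) / (P * Q * Q) := by
    unfold satProb xorProb
    have hc : (Fintype.card (Mat n m × Vec m) : ℝ) = P * Q * Q := by
      rw [Fintype.card_prod, card_mat,
        show Fintype.card (Fin m → ZMod 2) = 2^m by simp]
      push_cast
      rw [hPQ, ← hQ]
    rw [← hc, ← hFdef]
  rw [hsp]
  have hden : (0:ℝ) < P * Q * Q := by positivity
  have hbr : (0:ℝ) < P * Q + ((N:ℝ) - 1) * P := by nlinarith
  have hD : (0:ℝ) < (N:ℝ) * (P * Q + ((N:ℝ) - 1) * P) := mul_pos hN0 hbr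
  have hFc : ((N:ℝ) * (P * Q))^2 / ((N:ℝ) * (P * Q + ((N:ℝ) - 1) * P)) ≤ (F.card : ℝ) := by
    rw [div_le_iff₀ hD]; exact hCS2
  rw [le_div_iff₀ hden]
  refine le_trans ?_ hFc
  rw [le_div_iff₀ hD]
  have heq : (1 - Q/(N:ℝ)) = ((N:ℝ) - Q)/(N:ℝ) := by field_simp
  rw [heq, div_mul_eq_mul_div, div_mul_eq_mul_div, div_le_iff₀ hN0]
  have h1 : ((N:ℝ) - Q) * (Q + (N:ℝ) - 1) ≤ (N:ℝ)^2 := by nlinarith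
  calc ((N:ℝ) - Q) * (P * Q * Q) * ((N:ℝ) * (P * Q + ((N:ℝ) - 1) * P))
      = (((N:ℝ) - Q) * (Q + (N:ℝ) - 1)) * ((N:ℝ) * P^2 * Q^2) := by ring
    _ ≤ (N:ℝ)^2 * ((N:ℝ) * P^2 * Q^2) :=
        mul_le_mul_of_nonneg_right h1 (by positivity)
    _ = ((N:ℝ) * (P * Q))^2 * (N:ℝ) := by ring
lemma hammingNorm_indicator (n : ℕ) (T : Finset (Fin n)) :
    hammingNorm (fun i => if i ∈ T then (1 : ZMod 2) else 0) = T.card := by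
  unfold hammingNorm
  congr 1
  ext i
  by_cases h : i ∈ T <;> simp [h]

lemma choose_le_S (n k : ℕ) (hk : k ≤ n) : n.choose k ≤ (Sset n k).card := by
  have h1 : ((univ : Finset (Fin n)).powersetCard k).card = n.choose k := by
    rw [Finset.card_powersetCard, Finset.card_univ, Fintype.card_fin]
  rw [← h1]
  apply Finset.card_le_card_of_injOn (fun T => fun i => if i ∈ T then (1 : ZMod 2) else 0)
  · intro T hT
    rw [Finset.mem_coe, Finset.mem_powersetCard] at hT
    simp only [Finset.mem_coe, Sset, Finset.mem_filter, Finset.mem_univ, true_and]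
    rw [hammingNorm_indicator, hT.2]
  · intro T hT U hU h
    ext i
    have := congrFun h i
    by_cases h1 : i ∈ T
    · by_cases h2 : i ∈ U
      · simp [h1, h2]
      · simp only [h1, h2, if_true, if_false] at this; exact absurd this one_ne_zero
    · by_cases h2 : i ∈ U
      · simp only [h1, h2, if_true, if_false] at this; exact absurd this.symm one_ne_zero
      · simp [h1, h2]

lemma hammingNorm_compl (n : ℕ) (x : Fin n → ZMod 2) :
    hammingNorm (fun i => x i + 1) = n - hammingNorm x := by
  unfold hammingNorm
  have : (univ.filter fun i => x i + 1 ≠ 0) = univ.filter fun i => ¬ x i ≠ 0 := by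
    refine Finset.filter_congr fun i _ => ?_
    constructor
    · intro h h'
      apply h
      have : x i = 1 := by revert h'; generalize x i = a; revert a; decide
      rw [this]; decide
    · intro h
      simp only [not_not] at h
      rw [h]; decide
  rw [this, Finset.filter_not, Finset.card_sdiff_of_subset (Finset.filter_subset _ _), Finset.card_univ,
    Fintype.card_fin]

lemma half_le_S (n k : ℕ) (h : n ≤ 2*k + 1) : 2^(n-1) ≤ (Sset n k).card := by
  have hinj : ∀ x ∈ (Sset n k)ᶜ, (fun i => x i + 1) ∈ Sset n k := by
    intro x hx
    rw [Finset.mem_compl] at hx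
    simp only [Sset, Finset.mem_filter, Finset.mem_univ, true_and, not_le] at hx ⊢
    rw [hammingNorm_compl]
    have hle : hammingNorm x ≤ n := by
      unfold hammingNorm
      calc _ ≤ (univ : Finset (Fin n)).card := Finset.card_le_card (Finset.filter_subset _ _)
      _ = n := by simp
    omega
  have hcard : (Sset n k)ᶜ.card ≤ (Sset n k).card := by
    apply Finset.card_le_card_of_injOn _ hinj
    intro a _ b _ hab
    funext i
    have := congrFun hab i
    exact add_right_cancel this
  have htot : (Sset n k).card + (Sset n k)ᶜ.card = 2^n := by
    rw [Finset.card_add_card_compl, Fintype.card_fun]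
    simp
  rcases Nat.eq_zero_or_pos n with h0 | h0
  · subst h0
    have : 0 < (Sset 0 k).card := by
      refine Finset.card_pos.2 ⟨0, Finset.mem_filter.2 ⟨Finset.mem_univ _, ?_⟩⟩
      rw [hammingNorm_zero]; omega
    exact this
  · have h2 : 2^n = 2 * 2^(n-1) := by
      rw [← pow_succ']; congr 1; omega
    omega

lemma stepA (n k i a : ℕ) (hik : i < k) (hkn : k < n) :
    n.choose i * k^i * (n-k)^(a+1) ≤ n.choose (i+1) * k^(i+1) * (n-k)^a := by
  apply Nat.le_of_mul_le_mul_left _ (Nat.succ_pos i)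
  calc (i+1) * (n.choose i * k^i * (n-k)^(a+1))
      = (n.choose i * k^i * (n-k)^a) * ((i+1) * (n-k)) := by rw [pow_succ]; ring
    _ ≤ (n.choose i * k^i * (n-k)^a) * (k * (n-i)) :=
        Nat.mul_le_mul_left _ (Nat.mul_le_mul (by omega) (by omega))
    _ = (n.choose i * (n-i)) * (k^(i+1) * (n-k)^a) := by rw [pow_succ]; ring
    _ = (n.choose (i+1) * (i+1)) * (k^(i+1) * (n-k)^a) := by
        rw [Nat.choose_succ_right_eq]
    _ = (i+1) * (n.choose (i+1) * k^(i+1) * (n-k)^a) := by ring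

lemma stepB (n k i a : ℕ) (hki : k ≤ i) (hin : i < n) :
    n.choose (i+1) * k^(i+1) * (n-k)^a ≤ n.choose i * k^i * (n-k)^(a+1) := by
  apply Nat.le_of_mul_le_mul_left _ (Nat.succ_pos i)
  calc (i+1) * (n.choose (i+1) * k^(i+1) * (n-k)^a)
      = (n.choose (i+1) * (i+1)) * (k^(i+1) * (n-k)^a) := by ring
    _ = (n.choose i * (n-i)) * (k^(i+1) * (n-k)^a) := by rw [Nat.choose_succ_right_eq]
    _ = (n.choose i * k^i * (n-k)^a) * ((n-i) * k) := by rw [pow_succ]; ring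
    _ ≤ (n.choose i * k^i * (n-k)^a) * ((n-k) * (i+1)) :=
        Nat.mul_le_mul_left _ (Nat.mul_le_mul (by omega) (by omega))
    _ = (i+1) * (n.choose i * k^i * (n-k)^(a+1)) := by rw [pow_succ]; ring

lemma max_term (n k : ℕ) (hkn : k < n) (i : ℕ) (hin : i ≤ n) :
    n.choose i * k^i * (n-k)^(n-i) ≤ n.choose k * k^k * (n-k)^(n-k) := by
  rcases le_or_gt i k with h | h
  · obtain ⟨d, hd⟩ : ∃ d, i + d = k := ⟨k - i, by omega⟩
    clear h hin
    induction d generalizing i with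
    | zero =>
      obtain rfl : i = k := by omega
      exact le_rfl
    | succ d ih =>
      have hik : i < k := by omega
      have h1 : n - i = (n - (i+1)) + 1 := by omega
      rw [h1]
      exact le_trans (stepA n k i (n - (i+1)) hik hkn) (ih (i+1) (by omega))
  · obtain ⟨d, hd⟩ : ∃ d, k + d = i := ⟨i - k, by omega⟩
    clear h
    induction d generalizing i with
    | zero =>
      obtain rfl : i = k := by omega
      exact le_rfl
    | succ d ih =>
      obtain ⟨j, rfl⟩ : ∃ j, i = j + 1 := ⟨i - 1, by omega⟩
      have hkj : k ≤ j := by omega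
      have hjn : j < n := by omega
      have h1 : n - j = (n - (j+1)) + 1 := by omega
      refine le_trans (stepB n k j (n - (j+1)) hkj hjn) ?_
      rw [← h1]
      exact ih j (by omega) (by omega)

lemma nat_entropy (n k : ℕ) (hkn : k < n) :
    n^n ≤ (n+1) * (n.choose k * k^k * (n-k)^(n-k)) := by
  have hb : (k + (n-k))^n = ∑ i ∈ range (n+1), k^i * (n-k)^(n-i) * n.choose i :=
    add_pow k (n-k) n
  have hkk : k + (n-k) = n := by omega
  rw [hkk] at hb
  rw [hb]
  have : ∀ i ∈ range (n+1), k^i * (n-k)^(n-i) * n.choose i ≤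
      n.choose k * k^k * (n-k)^(n-k) := by
    intro i hi
    rw [Finset.mem_range] at hi
    calc k^i * (n-k)^(n-i) * n.choose i = n.choose i * k^i * (n-k)^(n-i) := by ring
    _ ≤ _ := max_term n k hkn i (by omega)
  calc ∑ i ∈ range (n+1), k^i * (n-k)^(n-i) * n.choose i
      ≤ (range (n+1)).card * (n.choose k * k^k * (n-k)^(n-k)) := by
        rw [← smul_eq_mul]
        exact Finset.sum_le_card_nsmul _ _ _ this
    _ = (n+1) * (n.choose k * k^k * (n-k)^(n-k)) := by rw [Finset.card_range]
lemma binEnt_continuousAt {ρ : ℝ} (h0 : ρ ≠ 0) (h1 : ρ ≠ 1) : ContinuousAt binEnt ρ := by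
  unfold binEnt
  have c1 : ContinuousAt (fun μ : ℝ => Real.logb 2 μ) ρ := Real.continuousAt_logb h0
  have c2 : ContinuousAt (fun μ : ℝ => Real.logb 2 (1 - μ)) ρ :=
    (Real.continuousAt_logb (by intro h; exact h1 (by linarith [sub_eq_zero.1 h]))).comp
      (continuousAt_const.sub continuousAt_id)
  exact ((continuousAt_id.neg.mul c1).sub ((continuousAt_const.sub continuousAt_id).mul c2))

lemma rent (n k : ℕ) (hk0 : 0 < k) (hkn : k < n) :
    (2:ℝ)^((n:ℝ) * binEnt ((k:ℝ)/(n:ℝ))) =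
      (n:ℝ)^(n:ℕ) / ((k:ℝ)^(k:ℕ) * (((n-k : ℕ)):ℝ)^((n-k : ℕ))) := by
  have hn0 : (0:ℝ) < n := by exact_mod_cast Nat.pos_of_ne_zero (by omega)
  have hk0' : (0:ℝ) < k := by exact_mod_cast hk0
  have hnk0 : (0:ℝ) < ((n-k:ℕ):ℝ) := by exact_mod_cast Nat.sub_pos_of_lt hkn
  have hX : (0:ℝ) < (n:ℝ)^(n:ℕ) / ((k:ℝ)^(k:ℕ) * (((n-k:ℕ)):ℝ)^((n-k:ℕ))) := by positivity
  rw [show (n:ℝ)^(n:ℕ) / ((k:ℝ)^(k:ℕ) * (((n-k:ℕ)):ℝ)^((n-k:ℕ))) =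
      (2:ℝ) ^ Real.logb 2 ((n:ℝ)^(n:ℕ) / ((k:ℝ)^(k:ℕ) * (((n-k:ℕ)):ℝ)^((n-k:ℕ))))
    from (Real.rpow_logb (by norm_num) (by norm_num) hX).symm]
  congr 1
  rw [Real.logb_div (by positivity) (by positivity),
    Real.logb_mul (by positivity) (by positivity),
    Real.logb_pow, Real.logb_pow, Real.logb_pow]
  unfold binEnt
  have h1mk : 1 - (k:ℝ)/(n:ℝ) = ((n-k:ℕ):ℝ)/(n:ℝ) := by
    rw [Nat.cast_sub hkn.le]
    field_simp
  rw [h1mk, Real.logb_div (ne_of_gt hk0') (ne_of_gt hn0),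
    Real.logb_div (ne_of_gt hnk0) (ne_of_gt hn0)]
  have hcast : ((n-k:ℕ):ℝ) = (n:ℝ) - (k:ℝ) := Nat.cast_sub hkn.le
  rw [hcast]
  field_simp
  ring

lemma boundA (n k : ℕ) (hk0 : 0 < k) (hkn : k < n) (t : ℝ)
    (ht : t * (n:ℝ) ≤ (n:ℝ) * binEnt ((k:ℝ)/(n:ℝ))) :
    (2:ℝ)^(t*(n:ℝ)) ≤ ((n:ℝ)+1) * (n.choose k : ℝ) := by
  have hk0' : (0:ℝ) < k := by exact_mod_cast hk0
  have hnk0 : (0:ℝ) < ((n-k:ℕ):ℝ) := by exact_mod_cast Nat.sub_pos_of_lt hkn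
  have hpos : (0:ℝ) < (k:ℝ)^(k:ℕ) * ((n-k:ℕ):ℝ)^((n-k:ℕ)) :=
    mul_pos (pow_pos hk0' k) (pow_pos hnk0 _)
  calc (2:ℝ)^(t*(n:ℝ)) ≤ (2:ℝ)^((n:ℝ) * binEnt ((k:ℝ)/(n:ℝ))) :=
        Real.rpow_le_rpow_of_exponent_le one_le_two ht
    _ = (n:ℝ)^(n:ℕ) / ((k:ℝ)^(k:ℕ) * ((n-k:ℕ):ℝ)^((n-k:ℕ))) := rent n k hk0 hkn
    _ ≤ ((n:ℝ)+1) * (n.choose k : ℝ) := by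
        rw [div_le_iff₀ hpos]
        calc (n:ℝ)^(n:ℕ) ≤ (((n+1) * (n.choose k * k^k * (n-k)^(n-k)) : ℕ) : ℝ) := by
              exact_mod_cast nat_entropy n k hkn
        _ = ((n:ℝ)+1) * (n.choose k : ℝ) * ((k:ℝ)^(k:ℕ) * ((n-k:ℕ):ℝ)^((n-k:ℕ))) := by
              push_cast; ring


lemma final_ineq (n k m : ℕ) (s t : ℝ) (hn1 : 1 ≤ n) (hst : s < t) (hs0 : 0 ≤ s)
    (hm : (m:ℝ) ≤ s*(n:ℝ) + 1)
    (hN : (2:ℝ)^(t*(n:ℝ)) ≤ ((n:ℝ)+1) * ((Sset n k).card : ℝ)) :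
    1 - 2*(((n:ℝ)+1) / ((2:ℝ)^(t-s):ℝ)^(n:ℕ)) ≤ satProb n k m := by
  have hNpos : (0:ℝ) < ((Sset n k).card : ℝ) := by exact_mod_cast S_card_pos n k
  have key := satProb_ge n k m hn1
  refine le_trans ?_ key
  have h2m : (2:ℝ)^(m:ℕ) ≤ 2 * (2:ℝ)^(s*(n:ℝ)) := by
    rw [← Real.rpow_natCast 2 m]
    calc (2:ℝ)^((m:ℕ):ℝ) ≤ (2:ℝ)^(s*(n:ℝ)+1) :=
          Real.rpow_le_rpow_of_exponent_le one_le_two hm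
    _ = 2 * (2:ℝ)^(s*(n:ℝ)) := by
          rw [Real.rpow_add (by norm_num), Real.rpow_one]; ring
  have hrn : ((2:ℝ)^(t-s):ℝ)^(n:ℕ) = (2:ℝ)^((t-s)*(n:ℝ)) := by
    rw [← Real.rpow_natCast ((2:ℝ)^(t-s):ℝ) n, ← Real.rpow_mul (by norm_num)]
  have htn : (2:ℝ)^(t*(n:ℝ)) = (2:ℝ)^((t-s)*(n:ℝ)) * (2:ℝ)^(s*(n:ℝ)) := by
    rw [← Real.rpow_add (by norm_num)]
    congr 1
    ring
  have hNlow' : (2:ℝ)^((t-s)*(n:ℝ)) * (2:ℝ)^(s*(n:ℝ)) ≤ ((n:ℝ)+1) * ((Sset n k).card : ℝ) := by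
    rw [← htn]; exact hN
  have hB : (0:ℝ) < (2:ℝ)^((t-s)*(n:ℝ)) := Real.rpow_pos_of_pos (by norm_num) _
  have hdiv : (2:ℝ)^(m:ℕ) / ((Sset n k).card : ℝ) ≤ 2*(((n:ℝ)+1) / ((2:ℝ)^(t-s):ℝ)^(n:ℕ)) := by
    rw [hrn]
    calc (2:ℝ)^(m:ℕ) / ((Sset n k).card : ℝ) ≤ (2 * (2:ℝ)^(s*(n:ℝ))) / ((Sset n k).card : ℝ) := by
          rw [div_le_div_iff₀ hNpos hNpos]
          exact mul_le_mul_of_nonneg_right h2m hNpos.le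
    _ ≤ (2*((n:ℝ)+1)) / (2:ℝ)^((t-s)*(n:ℝ)) := by
        rw [div_le_div_iff₀ hNpos hB]
        calc 2 * (2:ℝ)^(s*(n:ℝ)) * (2:ℝ)^((t-s)*(n:ℝ))
            = 2 * ((2:ℝ)^((t-s)*(n:ℝ)) * (2:ℝ)^(s*(n:ℝ))) := by ring
        _ ≤ 2 * (((n:ℝ)+1) * ((Sset n k).card : ℝ)) := by linarith [hNlow']
        _ = 2*((n:ℝ)+1) * ((Sset n k).card : ℝ) := by ring
    _ = 2*(((n:ℝ)+1) / (2:ℝ)^((t-s)*(n:ℝ))) := by ring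
  linarith [hdiv]

end Aux

theorem stmt8 (ρ : ℝ) (hρ0 : 0 < ρ) (hρ1 : ρ < 1) (s : ℝ) (hs0 : 0 ≤ s)
    (hs : s < if ρ ≤ 1 / 2 then binEnt ρ else 1) :
    Tendsto (fun n : ℕ => satProb n ⌊ρ * n⌋₊ ⌈s * n⌉₊) atTop (nhds 1) := by
  set φ : ℝ := if ρ ≤ 1 / 2 then binEnt ρ else 1 with hφ
  set t : ℝ := (s + φ) / 2 with htdef
  have hst : s < t := by rw [htdef]; linarith
  have htφ : t < φ := by rw [htdef]; linarith
  have hnatc : Tendsto (fun n : ℕ => (n:ℝ)) atTop atTop := tendsto_natCast_atTop_atTop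
  -- eventual lower bound on the number of light vectors
  have hNlow : ∀ᶠ n : ℕ in atTop,
      (2:ℝ)^(t*(n:ℝ)) ≤ ((n:ℝ)+1) * ((Sset n ⌊ρ * (n:ℕ)⌋₊).card : ℝ) := by
    by_cases hhalf : ρ ≤ 1/2
    · have htφ' : t < binEnt ρ := by rwa [hφ, if_pos (by exact_mod_cast hhalf)] at htφ
      -- ⌊ρn⌋/n → ρ
      have hfl : Tendsto (fun n : ℕ => ((⌊ρ * (n:ℕ)⌋₊ : ℝ))/(n:ℝ)) atTop (nhds ρ) := by
        have hlow : Tendsto (fun n : ℕ => ρ - 1/(n:ℝ)) atTop (nhds ρ) := by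
          simpa using tendsto_const_nhds.sub (tendsto_one_div_atTop_nhds_zero_nat (𝕜 := ℝ))
        refine tendsto_of_tendsto_of_tendsto_of_le_of_le' hlow tendsto_const_nhds ?_ ?_
        · filter_upwards [eventually_ge_atTop 1] with n hn
          have hn0 : (0:ℝ) < n := by exact_mod_cast hn
          rw [le_div_iff₀ hn0]
          have heq : (ρ - 1/(n:ℝ)) * n = ρ * n - 1 := by field_simp
          rw [heq]
          exact (Nat.sub_one_lt_floor _).le
        · filter_upwards [eventually_ge_atTop 1] with n hn
          have hn0 : (0:ℝ) < n := by exact_mod_cast hn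
          rw [div_le_iff₀ hn0]
          exact Nat.floor_le (by positivity)
      have hent : Tendsto (fun n : ℕ => binEnt ((⌊ρ * (n:ℕ)⌋₊ : ℝ)/(n:ℝ))) atTop
          (nhds (binEnt ρ)) :=
        ((binEnt_continuousAt (ne_of_gt hρ0) (ne_of_lt hρ1)).tendsto).comp hfl
      filter_upwards [hent.eventually (eventually_gt_nhds htφ'), eventually_ge_atTop 1,
          hnatc.eventually_ge_atTop (1/ρ)] with n hev1 hn1 hnρ
      set k := ⌊ρ * (n:ℕ)⌋₊ with hk
      have hn0 : (0:ℝ) < n := by exact_mod_cast hn1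
      have hk1 : 1 ≤ k := by
        rw [hk]
        refine Nat.le_floor ?_
        push_cast
        have h := (div_le_iff₀ hρ0).1 hnρ
        nlinarith [h]
      have hkn : k < n := by
        rw [hk, Nat.floor_lt (by positivity)]
        calc ρ * (n:ℕ) < 1 * n := by apply mul_lt_mul_of_pos_right hρ1 hn0
        _ = n := one_mul _
      calc (2:ℝ)^(t*(n:ℝ)) ≤ ((n:ℝ)+1) * (n.choose k : ℝ) := by
            refine boundA n k hk1 hkn t ?_
            rw [mul_comm]
            exact mul_le_mul_of_nonneg_left hev1.le hn0.le
      _ ≤ ((n:ℝ)+1) * ((Sset n k).card : ℝ) := by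
            gcongr
            exact_mod_cast choose_le_S n k hkn.le
    · have hρh : 1/2 < ρ := lt_of_not_ge hhalf
      have htφ1 : t < 1 := by rwa [hφ, if_neg hhalf] at htφ
      filter_upwards [eventually_ge_atTop 1, hnatc.eventually_ge_atTop (1/(2*ρ-1)),
          hnatc.eventually_ge_atTop (1/(1-t))] with n hn1 hn2 hn3
      set k := ⌊ρ * (n:ℕ)⌋₊ with hk
      have hn0 : (0:ℝ) < n := by exact_mod_cast hn1
      have h2ρ : (0:ℝ) < 2*ρ-1 := by linarith
      have hkhalf : n ≤ 2*k + 1 := by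
        have h1 : ρ * (n:ℕ) - 1 < (k:ℝ) := by rw [hk]; exact Nat.sub_one_lt_floor _
        have h2 : (1:ℝ) ≤ (2*ρ-1) * n := by
          have h := (div_le_iff₀ h2ρ).1 hn2
          nlinarith [h]
        have : (n:ℝ) ≤ 2*(k:ℝ) + 1 := by nlinarith
        exact_mod_cast this
      have hexp : t*(n:ℝ) ≤ ((n-1 : ℕ):ℝ) := by
        rw [Nat.cast_sub hn1]
        push_cast
        have h := (div_le_iff₀ (by linarith : (0:ℝ) < 1-t)).1 hn3
        nlinarith [h]
      calc (2:ℝ)^(t*(n:ℝ)) ≤ (2:ℝ)^(((n-1:ℕ):ℝ)) :=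
            Real.rpow_le_rpow_of_exponent_le one_le_two hexp
      _ = ((2^(n-1) : ℕ) : ℝ) := by rw [Real.rpow_natCast]; push_cast; ring
      _ ≤ ((Sset n k).card : ℝ) := by exact_mod_cast half_le_S n k hkhalf
      _ ≤ ((n:ℝ)+1) * ((Sset n k).card : ℝ) := by
            have h0N : (0:ℝ) ≤ ((Sset n k).card : ℝ) := Nat.cast_nonneg _
            nlinarith
  -- decay rate
  set r : ℝ := (2:ℝ)^(t-s) with hrdef
  have hr : 1 < r := by
    rw [hrdef, Real.one_lt_rpow_iff (by norm_num)]
    exact Or.inl ⟨by norm_num, by linarith⟩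
  have hg0 : Tendsto (fun n : ℕ => ((n:ℝ)+1) / r^n) atTop (nhds 0) := by
    have h1 := tendsto_pow_const_div_const_pow_of_one_lt 1 hr
    have h0 := tendsto_pow_const_div_const_pow_of_one_lt 0 hr
    simpa [add_div, pow_one] using h1.add h0
  have hglim : Tendsto (fun n : ℕ => 1 - 2*(((n:ℝ)+1) / r^n)) atTop (nhds 1) := by
    simpa using tendsto_const_nhds.sub (hg0.const_mul 2)
  refine tendsto_of_tendsto_of_tendsto_of_le_of_le' hglim tendsto_const_nhds ?_
    (Eventually.of_forall fun n => satProb_le_one n _ _)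
  filter_upwards [hNlow, eventually_ge_atTop 1] with n hN hn1
  rw [hrdef]
  refine final_ineq n _ _ s t hn1 hst hs0 ?_ hN
  exact (Nat.ceil_lt_add_one (by positivity)).le
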